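/- Let (f_i : X_i → Y_i)_{i∈I} be a set-indexed family of functions between topological spaces and g : X → Y a function. If f_i ≤₂ g for all i ∈ I, then ⌈f_i⌉_{i∈I} ≤₂ g, where ⌈f_i⌉(i,x) = (i, f_i(x)) is defined on the coproduct ∐X_i with values in ∐Y_i. -/

import Mathlib

def Red2 {X₁ Y₁ X₂ Y₂ : Type*}
    [TopologicalSpace X₁] [TopologicalSpace Y₁] [TopologicalSpace X₂] [TopologicalSpace Y₂]
    (f : X₁ → Y₁) (g : X₂ → Y₂) : Prop :=
  ∃ (A : Set (X₁ × Y₂)) (F : A → Y₁) (G : X₁ → X₂),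
    Continuous F ∧ Continuous G ∧
      ∀ x : X₁, ∃ h : (x, g (G x)) ∈ A, f x = F ⟨(x, g (G x)), h⟩

def coprodMap {I : Type*} {X Y : I → Type*} (f : ∀ i, X i → Y i) :
    (Σ i, X i) → Σ i, Y i :=
  fun p => ⟨p.1, f p.1 p.2⟩

theorem stmt1 {I : Type*} {X Y : I → Type*}
    [∀ i, TopologicalSpace (X i)] [∀ i, TopologicalSpace (Y i)]
    {U V : Type*} [TopologicalSpace U] [TopologicalSpace V]
    (f : ∀ i, X i → Y i) (g : U → V)
    (h : ∀ i, Red2 (f i) g) :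
    Red2 (coprodMap f) g := by
  choose A F G hF hG hspec using h
  -- the embedding φ : (Σ i, A i) → (Σ i, X i) × V
  let φ : (Σ i, A i) → (Σ i, X i) × V :=
    (Homeomorph.sigmaProdDistrib).symm ∘ Sigma.map id (fun i (a : A i) => (a : X i × V))
  have hφ : Topology.IsEmbedding φ := by
    refine (Homeomorph.sigmaProdDistrib).symm.isEmbedding.comp ?_
    exact (Topology.isEmbedding_sigmaMap (τ := fun i => X i × V) (f₁ := (id : I → I))
        (f₂ := fun i (a : A i) => (a : X i × V)) Function.injective_id).2
        (fun i => by exact Topology.IsEmbedding.subtypeVal)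
  let e : (Σ i, A i) ≃ₜ Set.range φ := Topology.IsEmbedding.toHomeomorph hφ
  refine ⟨Set.range φ,
    (fun p : Σ i, A i => (⟨p.1, F p.1 p.2⟩ : Σ i, Y i)) ∘ e.symm,
    fun p => G p.1 p.2, ?_, ?_, ?_⟩
  · refine Continuous.comp ?_ e.symm.continuous
    refine continuous_sigma fun i => ?_
    exact Continuous.comp (continuous_sigmaMk (σ := Y) (i := i)) (hF i)
  · exact continuous_sigma fun i => hG i
  · rintro ⟨i, x⟩
    obtain ⟨hmem, hx⟩ := hspec i x
    have key : φ ⟨i, ⟨(x, g (G i x)), hmem⟩⟩ = ((⟨i, x⟩ : Σ i, X i), g (G i x)) := rfl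
    refine ⟨⟨⟨i, ⟨(x, g (G i x)), hmem⟩⟩, key⟩, ?_⟩
    have : e.symm ⟨((⟨i, x⟩ : Σ i, X i), g (G i x)), ⟨_, key⟩⟩
        = ⟨i, ⟨(x, g (G i x)), hmem⟩⟩ := by
      apply e.injective
      apply Subtype.ext
      simp [e, Topology.IsEmbedding.toHomeomorph, key]
    show (⟨i, f i x⟩ : Σ i, Y i) = _
    rw [Function.comp_apply, this, hx]
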